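/- Let R be a commutative ring and A an R-algebra (possibly nonassociative) that is a finitely generated free R-module. If R is equationally Noetherian (every system of polynomial equations over R in finitely many variables is equivalent to a finite subsystem), then every system of A-algebra equations over A in finitely many variables, when written in coordinates with respect to an R-basis of A, is equivalent to a finite subsystem; hence A is equationally Noetherian. -/

import Mathlib

/-- Terms (polynomial expressions) over an `R`-algebra `A` in `n` variables, built
from constants of `A`, variables, addition, multiplication, and `R`-scalars. -/
inductive AlgTerm (R A : Type*) (n : ℕ) where
  | const : A → AlgTerm R A n
  | var : Fin n → AlgTerm R A n
  | add : AlgTerm R A n → AlgTerm R A n → AlgTerm R A n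
  | mul : AlgTerm R A n → AlgTerm R A n → AlgTerm R A n
  | smul : R → AlgTerm R A n → AlgTerm R A n

/-- Evaluation of a term at a point of `Aⁿ`. -/
def AlgTerm.eval {R A : Type*} [Semiring R] [NonUnitalNonAssocRing A] [Module R A] {n : ℕ}
    (v : Fin n → A) : AlgTerm R A n → A
  | const a => a
  | var i => v i
  | add s t => AlgTerm.eval v s + AlgTerm.eval v t
  | mul s t => AlgTerm.eval v s * AlgTerm.eval v t
  | smul r t => r • AlgTerm.eval v t

/-- `R` is equationally Noetherian: every system of polynomial equations over `R` in
finitely many variables is equivalent to a finite subsystem. -/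
def RingEqNoeth (R : Type*) [CommRing R] : Prop :=
  ∀ (n : ℕ) (S : Set (MvPolynomial (Fin n) R)),
    ∃ T ⊆ S, T.Finite ∧
      {a : Fin n → R | ∀ f ∈ S, MvPolynomial.eval a f = 0} =
      {a : Fin n → R | ∀ f ∈ T, MvPolynomial.eval a f = 0}

/-- The (possibly nonassociative) `R`-algebra `A` is equationally Noetherian. -/
def AlgEqNoeth (R A : Type*) [CommRing R] [NonUnitalNonAssocRing A] [Module R A] :
    Prop :=
  ∀ (n : ℕ) (S : Set (AlgTerm R A n)),
    ∃ T ⊆ S, T.Finite ∧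
      {a : Fin n → A | ∀ t ∈ S, AlgTerm.eval a t = 0} =
      {a : Fin n → A | ∀ t ∈ T, AlgTerm.eval a t = 0}


section Aux

variable {R A : Type*} [CommRing R] [NonUnitalNonAssocRing A] [Module R A]
  [SMulCommClass R A A] [IsScalarTower R A A] {m n : ℕ}

/-- Coordinate polynomials of a term. -/
noncomputable def AlgTerm.toPoly (b : Module.Basis (Fin m) R A) :
    AlgTerm R A n → Fin m → MvPolynomial (Fin (m * n)) R
  | .const a => fun k => MvPolynomial.C (b.repr a k)
  | .var i => fun k => MvPolynomial.X (finProdFinEquiv (k, i))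
  | .add s t => fun k => AlgTerm.toPoly b s k + AlgTerm.toPoly b t k
  | .mul s t => fun k => ∑ i, ∑ j, MvPolynomial.C (b.repr (b i * b j) k) *
      (AlgTerm.toPoly b s i * AlgTerm.toPoly b t j)
  | .smul r t => fun k => MvPolynomial.C r * AlgTerm.toPoly b t k

lemma repr_mul (b : Module.Basis (Fin m) R A) (x y : A) (k : Fin m) :
    b.repr (x * y) k = ∑ i, ∑ j, b.repr (b i * b j) k * (b.repr x i * b.repr y j) := by
  conv_lhs => rw [← b.sum_repr x, ← b.sum_repr y]
  rw [Finset.sum_mul]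
  simp only [Finset.mul_sum, smul_mul_assoc, mul_smul_comm, map_sum, map_smul,
    Finsupp.coe_finset_sum, Finset.sum_apply, Finsupp.coe_smul, Pi.smul_apply,
    smul_eq_mul]
  apply Finset.sum_congr rfl
  intro i _
  apply Finset.sum_congr rfl
  intro j _
  ring

lemma eval_toPoly (b : Module.Basis (Fin m) R A) (v : Fin n → A) (t : AlgTerm R A n) (k : Fin m) :
    MvPolynomial.eval (fun p => b.repr (v (finProdFinEquiv.symm p).2) (finProdFinEquiv.symm p).1)
      (t.toPoly b k) = b.repr (t.eval v) k := by
  induction t generalizing k with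
  | const a => simp only [AlgTerm.toPoly, AlgTerm.eval, MvPolynomial.eval_C]
  | var i =>
      simp only [AlgTerm.toPoly, AlgTerm.eval, MvPolynomial.eval_X, Equiv.symm_apply_apply]
  | add s t hs ht =>
      simp only [AlgTerm.toPoly, AlgTerm.eval, map_add, hs, ht, Finsupp.add_apply]
  | mul s t hs ht =>
      simp only [AlgTerm.toPoly, AlgTerm.eval, map_sum, map_mul, MvPolynomial.eval_C, hs, ht]
      rw [repr_mul b]
  | smul r t ht =>
      simp only [AlgTerm.toPoly, AlgTerm.eval, map_mul, MvPolynomial.eval_C, ht, map_smul,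
        Finsupp.coe_smul, Pi.smul_apply, smul_eq_mul]

end Aux

/-- If `R` is an equationally Noetherian commutative ring and `A` is an `R`-algebra
(possibly nonassociative) that is a finitely generated free `R`-module, then `A` is
equationally Noetherian. -/
theorem stmt9 {R A : Type*} [CommRing R] [NonUnitalNonAssocRing A] [Module R A]
    [SMulCommClass R A A] [IsScalarTower R A A] {m : ℕ}
    (b : Module.Basis (Fin m) R A) (hR : RingEqNoeth R) :
    AlgEqNoeth R A := by
  intro n S
  set S' : Set (MvPolynomial (Fin (m * n)) R) :=
    {p | ∃ t ∈ S, ∃ k, AlgTerm.toPoly b t k = p} with hS'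
  obtain ⟨T', hT'S, hT'fin, hZ⟩ := hR (m * n) S'
  -- choose, for each p ∈ T', a term in S mapping to it
  have hmem : ∀ p : T', ∃ t, t ∈ S ∧ ∃ k, AlgTerm.toPoly b t k = (p : MvPolynomial _ R) :=
    fun p => hT'S p.2
  choose g hgS hgk using hmem
  haveI : Finite T' := hT'fin.to_subtype
  refine ⟨Set.range g, ?_, Set.finite_range g, ?_⟩
  · rintro t ⟨p, rfl⟩; exact hgS p
  · ext v
    simp only [Set.mem_setOf_eq]
    constructor
    · intro hv t ht
      obtain ⟨p, rfl⟩ := ht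
      exact hv _ (hgS p)
    · intro hv t htS
      -- the coordinate point
      set w : Fin (m * n) → R :=
        fun p => b.repr (v (finProdFinEquiv.symm p).2) (finProdFinEquiv.symm p).1 with hw
      have hwT' : ∀ f ∈ T', MvPolynomial.eval w f = 0 := by
        intro f hf
        obtain ⟨k, hk⟩ := hgk ⟨f, hf⟩
        have hk' : AlgTerm.toPoly b (g ⟨f, hf⟩) k = f := hk
        have h0 : AlgTerm.eval v (g ⟨f, hf⟩) = 0 := hv _ ⟨⟨f, hf⟩, rfl⟩
        rw [← hk', eval_toPoly, h0, map_zero, Finsupp.coe_zero, Pi.zero_apply]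
      have hwS' : w ∈ {a : Fin (m * n) → R | ∀ f ∈ S', MvPolynomial.eval a f = 0} := by
        rw [hZ]; exact hwT'
      have : ∀ k, b.repr (AlgTerm.eval v t) k = 0 := by
        intro k
        have := hwS' (AlgTerm.toPoly b t k) ⟨t, htS, k, rfl⟩
        rwa [eval_toPoly] at this
      have : b.repr (AlgTerm.eval v t) = 0 := Finsupp.ext this
      simpa using b.repr.injective (by simpa using this)
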